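/- Instantaneous regret bound for mirror descent: let ψ : Ω → ℝ be differentiable and 1-strongly convex with respect to a norm ‖·‖ on a closed convex set Ω ⊆ ℝⁿ, let x_t ∈ Ω, g_t ∈ ℝⁿ, and x_{t+1} := argmin_{x∈Ω} ⟨g_t, x⟩ + B_ψ(x, x_t) where B_ψ(x,y) := ψ(x) − ψ(y) − ⟨∇ψ(y), x−y⟩. Then for all x* ∈ Ω: ⟨g_t, x_t − x*⟩ ≤ B_ψ(x*, x_t) − B_ψ(x*, x_{t+1}) + (1/2)‖g_t‖²_*, where ‖·‖_* is the dual norm. -/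

import Mathlib

open scoped RealInnerProductSpace

theorem mirror_descent_instantaneous_regret
    {n : ℕ}
    (Ω : Set (EuclideanSpace ℝ (Fin n))) (hΩconv : Convex ℝ Ω)
    (hΩclosed : IsClosed Ω) (hΩne : Ω.Nonempty)
    -- `N` is a norm on ℝⁿ and `Nstar` its dual norm
    (N Nstar : EuclideanSpace ℝ (Fin n) → ℝ)
    (hN0 : ∀ x, 0 ≤ N x)
    (hNsmul : ∀ (c : ℝ) x, N (c • x) = |c| * N x)
    (hNtri : ∀ x y, N (x + y) ≤ N x + N y)
    (hNdef : ∀ x, x ≠ 0 → 0 < N x)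
    (hNstar : ∀ g, Nstar g = sSup ((fun x => ⟪g, x⟫) '' {x | N x ≤ 1}))
    -- `ψ` is differentiable with gradient `Dψ`, and `B` is its Bregman divergence
    (ψ : EuclideanSpace ℝ (Fin n) → ℝ) (Dψ : EuclideanSpace ℝ (Fin n) → EuclideanSpace ℝ (Fin n))
    (hψ : ∀ y, HasGradientAt ψ (Dψ y) y)
    (B : EuclideanSpace ℝ (Fin n) → EuclideanSpace ℝ (Fin n) → ℝ)
    (hB : ∀ x y, B x y = ψ x - ψ y - ⟪Dψ y, x - y⟫)
    -- 1-strong convexity of `ψ` w.r.t. `N` on `Ω`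
    (hstrong : ∀ x ∈ Ω, ∀ y ∈ Ω, B x y ≥ (1 / 2) * (N (x - y)) ^ 2)
    (xt xnext : EuclideanSpace ℝ (Fin n)) (g : EuclideanSpace ℝ (Fin n))
    (hxt : xt ∈ Ω) (hxnext : xnext ∈ Ω)
    -- `xnext` minimizes `x ↦ ⟪g, x⟫ + B x xt` over `Ω`,
    (hmin : ∀ x ∈ Ω, ⟪g, xnext⟫ + B xnext xt ≤ ⟪g, x⟫ + B x xt)
    -- and satisfies the first-order optimality condition
    (hopt : ∀ x ∈ Ω, 0 ≤ ⟪g + Dψ xnext - Dψ xt, x - xnext⟫) :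
    ∀ xstar ∈ Ω,
      ⟪g, xt - xstar⟫ ≤ B xstar xt - B xstar xnext + (1 / 2) * (Nstar g) ^ 2 := by
  -- Basic facts about `N`
  have hN0' : N 0 = 0 := by simpa using hNsmul 0 0
  have hNneg : ∀ x, N (-x) = N x := by
    intro x; simpa using hNsmul (-1) x
  -- N is bounded above by a multiple of the Euclidean norm
  set C : ℝ := ∑ i : Fin n, N (EuclideanSpace.single i (1:ℝ)) with hC
  have hCnn : 0 ≤ C := Finset.sum_nonneg fun i _ => hN0 _
  have hupper : ∀ x, N x ≤ C * ‖x‖ := by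
    intro x
    have hx : x = ∑ i : Fin n, x i • EuclideanSpace.single i (1:ℝ) := by
      have := (EuclideanSpace.basisFun (Fin n) ℝ).sum_repr x
      simp only [EuclideanSpace.basisFun_repr, EuclideanSpace.basisFun_apply] at this
      exact this.symm
    have habs : ∀ i : Fin n, |x i| ≤ ‖x‖ := by
      intro i
      have h1 : ⟪EuclideanSpace.single i (1:ℝ), x⟫ = x i := by
        simp [EuclideanSpace.inner_single_left]
      have h2 := abs_real_inner_le_norm (EuclideanSpace.single i (1:ℝ)) x
      rw [h1] at h2
      simpa [EuclideanSpace.norm_single] using h2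
    calc N x = N (∑ i : Fin n, x i • EuclideanSpace.single i (1:ℝ)) := by rw [← hx]
      _ ≤ ∑ i : Fin n, N (x i • EuclideanSpace.single i (1:ℝ)) :=
          Finset.le_sum_of_subadditive N hN0'.le hNtri _ _
      _ = ∑ i : Fin n, |x i| * N (EuclideanSpace.single i (1:ℝ)) := by
          simp [hNsmul]
      _ ≤ ∑ i : Fin n, ‖x‖ * N (EuclideanSpace.single i (1:ℝ)) :=
          Finset.sum_le_sum fun i _ => mul_le_mul_of_nonneg_right (habs i) (hN0 _)
      _ = C * ‖x‖ := by rw [← Finset.mul_sum, mul_comm]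
  -- N is continuous
  have hlip : ∀ x y, |N x - N y| ≤ C * ‖x - y‖ := by
    intro x y
    have h1 : N x ≤ N y + N (x - y) := by
      have := hNtri y (x - y); simpa using this
    have h2 : N y ≤ N x + N (x - y) := by
      have := hNtri x (y - x)
      have h3 : N (y - x) = N (x - y) := by
        rw [← hNneg (x - y)]; congr 1; abel
      rw [h3] at this; simpa using this
    rw [abs_sub_le_iff]
    constructor <;> [skip; skip] <;>
      first
        | linarith [hupper (x - y)]
        | linarith [hupper (x - y)]
  have hcont : Continuous N := by
    apply LipschitzWith.continuous (K := C.toNNReal)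
    apply LipschitzWith.of_dist_le_mul
    intro x y
    have := hlip x y
    simpa [Real.dist_eq, dist_eq_norm, Real.coe_toNNReal C hCnn] using this
  -- N is bounded below by a positive multiple of the Euclidean norm
  obtain ⟨c, hc, hclow⟩ : ∃ c : ℝ, 0 < c ∧ ∀ x, c * ‖x‖ ≤ N x := by
    by_cases hS : (Metric.sphere (0 : EuclideanSpace ℝ (Fin n)) 1).Nonempty
    · obtain ⟨z, hz, hzmin⟩ := (isCompact_sphere (0 : EuclideanSpace ℝ (Fin n)) 1).exists_isMinOn
        hS hcont.continuousOn
      have hz1 : ‖z‖ = 1 := by simpa using hz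
      have hz0 : z ≠ 0 := by
        intro h; rw [h] at hz1; simp at hz1
      refine ⟨N z, hNdef z hz0, ?_⟩
      intro x
      rcases eq_or_ne x 0 with rfl | hx0
      · simp [hN0']
      · have hxn : ‖x‖ ≠ 0 := norm_ne_zero_iff.mpr hx0
        have hxnpos : 0 < ‖x‖ := norm_pos_iff.mpr hx0
        have hmem : ‖x‖⁻¹ • x ∈ Metric.sphere (0 : EuclideanSpace ℝ (Fin n)) 1 := by
          simp [norm_smul, abs_of_nonneg (inv_nonneg.mpr (norm_nonneg x)),
            inv_mul_cancel₀ hxn]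
        have hle : N z ≤ N (‖x‖⁻¹ • x) := hzmin hmem
        have heq : N (‖x‖⁻¹ • x) = ‖x‖⁻¹ * N x := by
          rw [hNsmul, abs_of_nonneg (inv_nonneg.mpr (norm_nonneg x))]
        rw [heq] at hle
        calc N z * ‖x‖ ≤ (‖x‖⁻¹ * N x) * ‖x‖ :=
              mul_le_mul_of_nonneg_right hle (norm_nonneg x)
          _ = N x := by field_simp
    · refine ⟨1, one_pos, ?_⟩
      intro x
      rcases eq_or_ne x 0 with rfl | hx0
      · simp [hN0']
      · exfalso
        apply hS
        have hxn : ‖x‖ ≠ 0 := norm_ne_zero_iff.mpr hx0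
        exact ⟨‖x‖⁻¹ • x, by
          simp [norm_smul, abs_of_nonneg (inv_nonneg.mpr (norm_nonneg x)),
            inv_mul_cancel₀ hxn]⟩
  -- BddAbove of the dual norm set
  have hbdd : BddAbove ((fun x => ⟪g, x⟫) '' {x | N x ≤ 1}) := by
    refine ⟨‖g‖ * c⁻¹, ?_⟩
    rintro r ⟨x, hx, rfl⟩
    have hx1 : N x ≤ 1 := hx
    have hxle : ‖x‖ ≤ c⁻¹ := by
      have := hclow x
      rw [← one_div, le_div_iff₀ hc]
      nlinarith
    calc ⟪g, x⟫ ≤ ‖g‖ * ‖x‖ := real_inner_le_norm g x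
      _ ≤ ‖g‖ * c⁻¹ := mul_le_mul_of_nonneg_left hxle (norm_nonneg g)
  -- Key dual norm inequality
  have hdual : ∀ u, ⟪g, u⟫ ≤ Nstar g * N u := by
    intro u
    rcases eq_or_ne u 0 with rfl | hu0
    · simp [hN0', inner_zero_right]
    · have hNu : 0 < N u := hNdef u hu0
      have hmem : N ((N u)⁻¹ • u) ≤ 1 := by
        rw [hNsmul, abs_of_nonneg (inv_nonneg.mpr (hN0 u)), inv_mul_cancel₀ hNu.ne']
      have hle : ⟪g, (N u)⁻¹ • u⟫ ≤ Nstar g := by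
        rw [hNstar]
        exact le_csSup hbdd ⟨_, hmem, rfl⟩
      rw [real_inner_smul_right] at hle
      calc ⟪g, u⟫ = N u * ((N u)⁻¹ * ⟪g, u⟫) := by field_simp
        _ ≤ N u * Nstar g := mul_le_mul_of_nonneg_left hle hNu.le
        _ = Nstar g * N u := mul_comm _ _
  -- Main argument
  intro xstar hxstar
  have h1 := hopt xstar hxstar
  have h2 : ⟪g, xnext - xstar⟫ ≤ ⟪Dψ xnext - Dψ xt, xstar - xnext⟫ := by
    simp only [inner_sub_left, inner_add_left, inner_sub_right] at h1 ⊢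
    linarith
  have h3 : ⟪Dψ xnext - Dψ xt, xstar - xnext⟫ = B xstar xt - B xstar xnext - B xnext xt := by
    simp only [hB, inner_sub_left, inner_sub_right]
    ring
  rw [h3] at h2
  have h4 : (1 / 2) * (N (xnext - xt)) ^ 2 ≤ B xnext xt := hstrong xnext hxnext xt hxt
  have h5 : ⟪g, xt - xnext⟫ ≤ Nstar g * N (xt - xnext) := hdual _
  have h6 : N (xt - xnext) = N (xnext - xt) := by
    rw [← hNneg (xnext - xt)]; congr 1; abel
  rw [h6] at h5
  have h7 : Nstar g * N (xnext - xt) ≤ (1/2) * (Nstar g)^2 + (1/2) * (N (xnext - xt))^2 := by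
    nlinarith [sq_nonneg (Nstar g - N (xnext - xt))]
  have hsplit : ⟪g, xt - xstar⟫ = ⟪g, xt - xnext⟫ + ⟪g, xnext - xstar⟫ := by
    simp only [inner_sub_right]; ring
  linarith
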